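/- Let M be a matroid, I an independent set, u ∈ cl(I) \ I, v ∈ C(u, I), and J := I + u - v. Let x ∈ (cl(I) \ I) - u and y ∈ I - v, and suppose that y ∉ C(u, I) or v ∉ C(x, I). Then y ∈ C(x, I) if and only if y ∈ C(x, J). -/

import Mathlib

/-- A circuit of a matroid is an inclusion-wise minimal dependent set. -/
def Matroid.IsCircuit' {α : Type*} (M : Matroid α) (C : Set α) : Prop :=
  M.Dep C ∧ ∀ ⦃D : Set α⦄, D ⊂ C → M.Indep D

/-- The fundamental-circuit property: `C` is the circuit of `M` contained in `I + u`
and containing `u`. -/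
def IsFundCircuit {α : Type*} (M : Matroid α) (I : Set α) (u : α) (C : Set α) : Prop :=
  M.IsCircuit' C ∧ u ∈ C ∧ C ⊆ insert u I

open Set

section Aux

variable {α : Type*} {M : Matroid α} {I C C' Cu Cx CxJ : Set α} {u v e x : α}

/-- Every element of a circuit is in the closure of the rest. -/
lemma Matroid.IsCircuit'.mem_closure_diff (hC : M.IsCircuit' C) (he : e ∈ C) :
    e ∈ M.closure (C \ {e}) := by
  have hind : M.Indep (C \ {e}) := hC.2 (sdiff_singleton_ssubset.2 he)
  rw [hind.mem_closure_iff]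
  left
  rw [insert_diff_singleton, insert_eq_of_mem he]
  exact hC.1

/-- One-sided uniqueness of fundamental circuits. -/
lemma fund_subset (hI : M.Indep I) (hC : IsFundCircuit M I u C)
    (hC' : IsFundCircuit M I u C') : C ⊆ C' := by
  have hKcl : u ∈ M.closure (C' \ {u}) := hC'.1.mem_closure_diff hC'.2.1
  have hKI : C' \ {u} ⊆ I := fun f hf => (hC'.2.2 hf.1).resolve_left hf.2
  have hsub : C ⊆ insert u (C' \ {u}) := by
    intro e he
    rcases eq_or_ne e u with rfl | heu
    · exact mem_insert _ _
    by_contra heK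
    have heC' : e ∉ C' \ {u} := fun h => heK (Or.inr h)
    have heI : e ∈ I := (hC.2.2 he).resolve_left heu
    have h1 : e ∈ M.closure (C \ {e}) := hC.1.mem_closure_diff he
    have h2 : C \ {e} ⊆ insert u (I \ {e}) := by
      intro f hf
      rcases (hC.2.2 hf.1) with rfl | hfI
      · exact mem_insert _ _
      · exact Or.inr ⟨hfI, hf.2⟩
    have h3 : u ∈ M.closure (I \ {e}) :=
      M.closure_subset_closure (show C' \ {u} ⊆ I \ {e} from
        fun f hf => ⟨hKI hf, fun h => heC' (h ▸ hf)⟩) hKcl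
    have h4 : e ∈ M.closure (I \ {e}) := by
      have := M.closure_subset_closure h2 h1
      rwa [Matroid.closure_insert_eq_of_mem_closure h3] at this
    exact hI.notMem_closure_sdiff_of_mem heI h4
  intro e he
  rcases hsub he with rfl | h
  · exact hC'.2.1
  · exact h.1

/-- Uniqueness of fundamental circuits. -/
lemma fund_unique (hI : M.Indep I) (hC : IsFundCircuit M I u C)
    (hC' : IsFundCircuit M I u C') : C = C' :=
  (fund_subset hI hC hC').antisymm (fund_subset hI hC' hC)

lemma J_indep (hI : M.Indep I) (hu : u ∈ M.closure I \ I) (hCu : IsFundCircuit M I u Cu)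
    (hv : v ∈ Cu) (hvu : v ≠ u) : M.Indep (insert u I \ {v}) := by
  have hvI : v ∈ I := (hCu.2.2 hv).resolve_left hvu
  have hIv : M.Indep (I \ {v}) := hI.subset diff_subset
  have huv : u ∉ I \ {v} := fun h => hu.2 h.1
  have hkey : M.Indep (insert u (I \ {v})) := by
    rw [hIv.insert_indep_iff_of_notMem huv]
    refine ⟨M.closure_subset_ground I hu.1, fun hucl => ?_⟩
    have h1 : v ∈ M.closure (Cu \ {v}) := hCu.1.mem_closure_diff hv
    have h2 : Cu \ {v} ⊆ insert u (I \ {v}) := by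
      intro f hf
      rcases hCu.2.2 hf.1 with rfl | hfI
      · exact mem_insert _ _
      · exact Or.inr ⟨hfI, hf.2⟩
    have h3 : v ∈ M.closure (I \ {v}) := by
      have := M.closure_subset_closure h2 h1
      rwa [Matroid.closure_insert_eq_of_mem_closure hucl] at this
    exact hI.notMem_closure_sdiff_of_mem hvI h3
  rwa [insert_diff_singleton_comm hvu.symm] at hkey

lemma closure_J (hI : M.Indep I) (hu : u ∈ M.closure I \ I) (hCu : IsFundCircuit M I u Cu)
    (hv : v ∈ Cu) (hvu : v ≠ u) :
    M.closure (insert u I \ {v}) = M.closure I := by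
  have hvI : v ∈ I := (hCu.2.2 hv).resolve_left hvu
  apply subset_antisymm
  · apply Matroid.closure_subset_closure_of_subset_closure
    intro f hf
    rcases hf.1 with rfl | hfI
    · exact hu.1
    · exact M.subset_closure I hI.subset_ground hfI
  · apply Matroid.closure_subset_closure_of_subset_closure
    intro f hfI
    rcases eq_or_ne f v with rfl | hfv
    · have h1 : f ∈ M.closure (Cu \ {f}) := hCu.1.mem_closure_diff hv
      exact M.closure_subset_closure (show Cu \ {f} ⊆ insert u I \ {f} from
        fun g hg => ⟨hCu.2.2 hg.1, hg.2⟩) h1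
    · exact M.subset_closure _ ((J_indep hI hu hCu hv hvu).subset_ground)
        ⟨Or.inr hfI, hfv⟩

/-- Key lemma: the fundamental circuit of `x` over `J = I + u - v` is contained in
`C(x,I) ∪ C(u,I)`. -/
lemma key_subset (hI : M.Indep I) (hu : u ∈ M.closure I \ I) (hCu : IsFundCircuit M I u Cu)
    (hv : v ∈ Cu) (hvu : v ≠ u) (hxI : x ∉ I) (hxu : x ≠ u)
    (hCx : IsFundCircuit M I x Cx)
    (hCxJ : IsFundCircuit M (insert u I \ {v}) x CxJ) : CxJ ⊆ Cx ∪ Cu := by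
  set J := insert u I \ {v} with hJdef
  have hJ : M.Indep J := J_indep hI hu hCu hv hvu
  intro e he
  by_contra heCC
  have heCx : e ∉ Cx := fun h => heCC (Or.inl h)
  have heCu : e ∉ Cu := fun h => heCC (Or.inr h)
  have hex : e ≠ x := fun h => heCx (h ▸ hCx.2.1)
  have heJ : e ∈ J := (hCxJ.2.2 he).resolve_left hex
  -- v ∈ cl (J \ {e})
  have hvcl : v ∈ M.closure (J \ {e}) := by
    have h1 : v ∈ M.closure (Cu \ {v}) := hCu.1.mem_closure_diff hv
    refine M.closure_subset_closure (show Cu \ {v} ⊆ J \ {e} from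
      fun f hf => ⟨⟨hCu.2.2 hf.1, hf.2⟩, fun h => heCu (h ▸ hf.1)⟩) h1
  -- Cx \ {x} ⊆ cl (J \ {e})
  have hCxcl : Cx \ {x} ⊆ M.closure (J \ {e}) := by
    intro f hf
    have hfI : f ∈ I := (hCx.2.2 hf.1).resolve_left hf.2
    rcases eq_or_ne f v with rfl | hfv
    · exact hvcl
    · refine M.subset_closure _ ((hJ.subset diff_subset).subset_ground)
        ⟨⟨Or.inr hfI, hfv⟩, fun h => heCx (h ▸ hf.1)⟩
  -- x ∈ cl (J \ {e})
  have hxcl : x ∈ M.closure (J \ {e}) :=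
    M.closure_subset_closure_of_subset_closure hCxcl (hCx.1.mem_closure_diff hCx.2.1)
  -- e ∈ cl (J \ {e})
  have hecl : e ∈ M.closure (J \ {e}) := by
    have h1 : e ∈ M.closure (CxJ \ {e}) := hCxJ.1.mem_closure_diff he
    have h2 : CxJ \ {e} ⊆ insert x (J \ {e}) := by
      intro f hf
      rcases hCxJ.2.2 hf.1 with rfl | hfJ
      · exact mem_insert _ _
      · exact Or.inr ⟨hfJ, hf.2⟩
    have := M.closure_subset_closure h2 h1
    rwa [Matroid.closure_insert_eq_of_mem_closure hxcl] at this
  exact hJ.notMem_closure_sdiff_of_mem heJ hecl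

end Aux

/-- Lemma (Iri–Tomizawa, parts (iii) and (iv)): with `J = I + u - v` where
`v ∈ C(u, I)`, for `x ∈ (cl(I) \ I) - u` and `y ∈ I - v`, if `y ∉ C(u, I)` or
`v ∉ C(x, I)`, then `y ∈ C(x, I) ↔ y ∈ C(x, J)`. -/
theorem iri_tomizawa_iii_iv {α : Type*} (M : Matroid α) (I : Set α) (hI : M.Indep I)
    (u : α) (hu : u ∈ M.closure I \ I) (Cu : Set α) (hCu : IsFundCircuit M I u Cu)
    (v : α) (hv : v ∈ Cu) (x : α) (hx : x ∈ M.closure I \ I) (hxu : x ≠ u)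
    (y : α) (hy : y ∈ I) (hyv : y ≠ v)
    (Cx : Set α) (hCx : IsFundCircuit M I x Cx)
    (CxJ : Set α) (hCxJ : IsFundCircuit M (insert u I \ {v}) x CxJ)
    (hside : y ∉ Cu ∨ v ∉ Cx) :
    y ∈ Cx ↔ y ∈ CxJ := by
  rcases eq_or_ne v u with rfl | hvu
  · -- J = I, so the two circuits coincide
    rw [Set.insert_diff_self_of_notMem hu.2] at hCxJ
    rw [fund_unique hI hCx hCxJ]
  have hvI : v ∈ I := (hCu.2.2 hv).resolve_left hvu
  set J := insert u I \ {v} with hJdef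
  have hJ : M.Indep J := J_indep hI hu hCu hv hvu
  by_cases hvCx : v ∈ Cx
  · -- hard case: need y ∉ Cu
    have hyCu : y ∉ Cu := hside.resolve_right (fun h => h hvCx)
    -- Forward direction via key lemma applied with I,u,v; backward via swapped roles.
    have hclJ : M.closure J = M.closure I := closure_J hI hu hCu hv hvu
    have huJ : u ∈ J := ⟨Set.mem_insert _ _, hvu.symm⟩
    have hvJ : v ∈ M.closure J \ J := by
      rw [hclJ]
      exact ⟨M.subset_closure I hI.subset_ground hvI, fun h => h.2 rfl⟩
    have hCuJ : IsFundCircuit M J v Cu := by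
      refine ⟨hCu.1, hv, fun f hf => ?_⟩
      rcases eq_or_ne f v with rfl | hfv
      · exact Set.mem_insert _ _
      rcases hCu.2.2 hf with rfl | hfI
      · exact Or.inr huJ
      · exact Or.inr ⟨Or.inr hfI, hfv⟩
    have hswap : insert v J \ {u} = I := by
      rw [hJdef]
      ext f
      simp only [Set.mem_insert_iff, Set.mem_diff, Set.mem_singleton_iff]
      constructor
      · rintro ⟨rfl | ⟨rfl | hfI, _⟩, hfu⟩
        · exact hvI
        · exact absurd rfl hfu
        · exact hfI
      · intro hfI
        refine ⟨?_, fun h => hu.2 (h ▸ hfI)⟩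
        rcases eq_or_ne f v with rfl | hfv
        · exact Or.inl rfl
        · exact Or.inr ⟨Or.inr hfI, hfv⟩
    have hCxSwap : IsFundCircuit M (insert v J \ {u}) x Cx := by rw [hswap]; exact hCx
    have hxJ : x ∉ J := fun h => h.1.elim (fun h' => hxu h') (fun h' => hx.2 h')
    have hxv : x ≠ v := fun h => hx.2 (h ▸ hvI)
    have hxclJ : x ∈ M.closure J \ J := ⟨hclJ ▸ hx.1, hxJ⟩
    have fwd : CxJ ⊆ Cx ∪ Cu :=
      key_subset hI hu hCu hv hvu hx.2 hxu hCx hCxJ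
    have bwd : Cx ⊆ CxJ ∪ Cu :=
      key_subset hJ hvJ hCuJ hCu.2.1 (fun h => hvu h.symm) hxJ hxv hCxJ hCxSwap
    constructor
    · intro hyCx
      exact (bwd hyCx).resolve_right hyCu
    · intro hyCxJ
      exact (fwd hyCxJ).resolve_right hyCu
  · -- easy case: v ∉ Cx, so Cx is also the fundamental circuit over J
    have hCxOverJ : IsFundCircuit M J x Cx := by
      refine ⟨hCx.1, hCx.2.1, fun f hf => ?_⟩
      rcases hCx.2.2 hf with rfl | hfI
      · exact Set.mem_insert _ _
      · exact Or.inr ⟨Or.inr hfI, fun h => hvCx (h ▸ hf)⟩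
    rw [fund_unique hJ hCxOverJ hCxJ]
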